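/- For any continuous positive T-periodic β, the optimal vaccination effort satisfies 𝔼[p_opt] ≤ p₀(μ+α)/(p₀+μ+α) < μ+α, where p₀ = (μ+α)(β̄/(γ+μ) − 1) with β̄ = sup β; i.e. the optimal strategy vaccinates on average strictly less than μ+α per unit time. -/

import Mathlib

open intervalIntegral

/-- A strategy `p` is preventive for transmission `β` if it is continuous,
nonnegative, `T`-periodic, and the corresponding `T`-periodic disease-free
susceptible solution `S` satisfies `β t * S t < γ + μ` for all `t`. -/
def Preventive (μ α γ T : ℝ) (β p S : ℝ → ℝ) : Prop :=
  Continuous p ∧ (∀ t, 0 ≤ p t) ∧ Function.Periodic p T ∧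
  (∀ t, HasDerivAt S (μ + α - (p t + μ + α) * S t) t) ∧
  Function.Periodic S T ∧
  ∀ t, β t * S t < γ + μ

/-- The periodic susceptible solution is positive. -/
lemma S_pos_of_periodic (μ α T : ℝ) (hμ : 0 < μ) (hα : 0 < α) (hT : 0 < T)
    (p S : ℝ → ℝ) (hp : ∀ t, 0 ≤ p t)
    (hS : ∀ t, HasDerivAt S (μ + α - (p t + μ + α) * S t) t)
    (hSper : Function.Periodic S T) : ∀ t, 0 < S t := by
  have hScont : Continuous S :=
    continuous_iff_continuousAt.2 fun t => (hS t).continuousAt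
  obtain ⟨t₀, ht₀mem, ht₀min⟩ :=
    isCompact_Icc.exists_isMinOn (by exact ⟨0, Set.left_mem_Icc.2 hT.le⟩)
      hScont.continuousOn (f := S) (s := Set.Icc (0:ℝ) T)
  have hglob : ∀ t, S t₀ ≤ S t := by
    intro t
    obtain ⟨y, hy, hyeq⟩ := hSper.exists_mem_Ico₀ hT t
    rw [hyeq]
    exact ht₀min (Set.Ico_subset_Icc_self hy)
  have hloc : IsLocalMin S t₀ := Filter.Eventually.of_forall hglob
  have hzero : μ + α - (p t₀ + μ + α) * S t₀ = 0 :=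
    hloc.hasDerivAt_eq_zero (hS t₀)
  have hpos : 0 < S t₀ := by
    have hq : 0 < p t₀ + μ + α := by have := hp t₀; linarith
    nlinarith
  intro t
  exact lt_of_lt_of_le hpos (hglob t)

theorem optimal_effort_bound
    (μ α γ T : ℝ) (hμ : 0 < μ) (hα : 0 < α) (hγ : 0 < γ) (hT : 0 < T)
    (β : ℝ → ℝ) (hβc : Continuous β) (hβpos : ∀ t, 0 < β t)
    (hβper : Function.Periodic β T)
    (βbar : ℝ) (hβbar : βbar = sSup (β '' Set.Icc 0 T))
    (hβbargt : γ + μ < βbar)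
    (p₀ : ℝ) (hp₀ : p₀ = (μ + α) * (βbar / (γ + μ) - 1)) :
    sInf {e : ℝ | ∃ p S : ℝ → ℝ, Preventive μ α γ T β p S ∧
        e = (1 / T) * ∫ t in (0:ℝ)..T, p t * S t}
      ≤ p₀ * (μ + α) / (p₀ + μ + α)
    ∧ p₀ * (μ + α) / (p₀ + μ + α) < μ + α := by
  have hγμ : 0 < γ + μ := by linarith
  have hμα : 0 < μ + α := by linarith
  have hp₀pos : 0 < p₀ := by
    rw [hp₀]
    have : 1 < βbar / (γ + μ) := (one_lt_div hγμ).2 hβbargt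
    nlinarith
  have hβle : ∀ t, β t ≤ βbar := by
    intro t
    obtain ⟨y, hy, hyeq⟩ := hβper.exists_mem_Ico₀ hT t
    rw [hyeq, hβbar]
    exact le_csSup ((isCompact_Icc.image hβc).bddAbove)
      ⟨y, Set.Ico_subset_Icc_self hy, rfl⟩
  -- the set of efforts is bounded below by 0
  have hbdd : BddBelow {e : ℝ | ∃ p S : ℝ → ℝ, Preventive μ α γ T β p S ∧
      e = (1 / T) * ∫ t in (0:ℝ)..T, p t * S t} := by
    refine ⟨0, fun e he => ?_⟩
    obtain ⟨p, S, ⟨hpc, hpnn, hpper, hS, hSper, hβS⟩, he⟩ := he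
    have hSpos := S_pos_of_periodic μ α T hμ hα hT p S hpnn hS hSper
    have hint : 0 ≤ ∫ t in (0:ℝ)..T, p t * S t :=
      intervalIntegral.integral_nonneg hT.le
        (fun u _ => mul_nonneg (hpnn u) (hSpos u).le)
    rw [he]
    positivity
  constructor
  · -- sInf ≤ bound, via constant strategies p₀ + ε
    refine le_of_forall_pos_le_add fun ε hε => ?_
    set q := p₀ + ε with hq
    have hqpos : 0 < q := by positivity
    have hD : 0 < q + μ + α := by positivity
    have hmem : q * (μ + α) / (q + μ + α) ∈ {e : ℝ | ∃ p S : ℝ → ℝ,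
        Preventive μ α γ T β p S ∧ e = (1 / T) * ∫ t in (0:ℝ)..T, p t * S t} := by
      refine ⟨fun _ => q, fun _ => (μ + α) / (q + μ + α),
        ⟨continuous_const, fun _ => hqpos.le, fun _ => rfl, ?_, fun _ => rfl, ?_⟩, ?_⟩
      · intro t
        have h0 : μ + α - (q + μ + α) * ((μ + α) / (q + μ + α)) = 0 := by
          field_simp
          ring
        rw [h0]
        exact hasDerivAt_const t _
      · intro t
        have h1 : β t * ((μ + α) / (q + μ + α)) ≤ βbar * ((μ + α) / (q + μ + α)) := by
          apply mul_le_mul_of_nonneg_right (hβle t)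
          positivity
        refine lt_of_le_of_lt h1 ?_
        have hkey : (γ + μ) * p₀ = (μ + α) * (βbar - (γ + μ)) := by
          rw [hp₀]; field_simp
        rw [← mul_div_assoc, div_lt_iff₀ hD]
        nlinarith
      · rw [intervalIntegral.integral_const]
        rw [smul_eq_mul]
        field_simp
        ring
    have h1 : sInf {e : ℝ | ∃ p S : ℝ → ℝ, Preventive μ α γ T β p S ∧
        e = (1 / T) * ∫ t in (0:ℝ)..T, p t * S t} ≤ q * (μ + α) / (q + μ + α) :=
      csInf_le hbdd hmem
    refine h1.trans ?_
    have hD0 : 0 < p₀ + μ + α := by positivity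
    have hrhs : p₀ * (μ + α) / (p₀ + μ + α) + ε
        = (p₀ * (μ + α) + ε * (p₀ + μ + α)) / (p₀ + μ + α) := by
      field_simp
    rw [hrhs, div_le_div_iff₀ hD hD0, hq]
    nlinarith [mul_pos (mul_pos hε hp₀pos) hμα, mul_pos (mul_pos hε hp₀pos) hD0,
      mul_pos (mul_pos hε hε) hD0]
  · rw [div_lt_iff₀ (by positivity)]
    nlinarith
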